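/- Let H0, λ, t0 be positive real numbers, and let h : [t0,∞) → ℝ be of class C¹ with |h'(t)| ≤ H0/t for every t ≥ t0. Then for every positive integer n and every t ≥ t0 one has |∫_{t0}^t cos(nλs + n·h(s))/s ds| ≤ 2(H0 + 4)/(λ·t0). -/

import Mathlib

open Real Set Filter MeasureTheory intervalIntegral

lemma osc_aux (L t0 t A : ℝ) (hL : 0 < L) (ht0 : 0 < t0) (ht : t0 ≤ t) (hA : 0 ≤ A)
    (u u' v v' : ℝ → ℝ)
    (hu : ∀ s ∈ Icc t0 t, HasDerivAt u (u' s) s)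
    (hv : ∀ s : ℝ, HasDerivAt v (v' s) s)
    (hu'c : ContinuousOn u' (Icc t0 t))
    (hv'c : Continuous v')
    (hub : ∀ s ∈ Icc t0 t, |u s| ≤ 1 / t0)
    (hvb : ∀ s : ℝ, |v s| ≤ 1 / L)
    (hu'b : ∀ s ∈ Icc t0 t, |u' s| ≤ A / s ^ 2) :
    |∫ s in t0..t, u s * v' s| ≤ (2 + A) / (L * t0) := by
  have huIcc : uIcc t0 t = Icc t0 t := uIcc_of_le ht
  have hvc : Continuous v := by
    rw [continuous_iff_continuousAt]; exact fun s => (hv s).continuousAt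
  have huc : ContinuousOn u (Icc t0 t) := fun s hs => (hu s hs).continuousAt.continuousWithinAt
  have hIuv' : IntervalIntegrable (fun s => u s * v' s) volume t0 t := by
    apply ContinuousOn.intervalIntegrable
    rw [huIcc]; exact huc.mul hv'c.continuousOn
  have hIu'v : IntervalIntegrable (fun s => u' s * v s) volume t0 t := by
    apply ContinuousOn.intervalIntegrable
    rw [huIcc]; exact hu'c.mul hvc.continuousOn
  have ibp := intervalIntegral.integral_mul_deriv_eq_deriv_mul
    (u := u) (v := v) (u' := u') (v' := v')
    (fun s hs => hu s (huIcc ▸ hs)) (fun s _ => hv s)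
    (by apply ContinuousOn.intervalIntegrable; rw [huIcc]; exact hu'c)
    (hv'c.intervalIntegrable _ _)
  rw [ibp]
  -- bound the remainder integral
  have hC : 0 ≤ A / L := div_nonneg hA hL.le
  have hval : ∫ s in t0..t, A / L / s ^ 2 = A / L / t0 - A / L / t := by
    have : ∀ s ∈ uIcc t0 t, HasDerivAt (fun x => -(A / L * x⁻¹)) (A / L / s ^ 2) s := by
      intro s hs
      rw [huIcc] at hs
      have hs0 : s ≠ 0 := (lt_of_lt_of_le ht0 hs.1).ne'
      have := ((hasDerivAt_inv hs0).const_mul (A / L)).neg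
      refine this.congr_deriv ?_
      ring
    have hint : IntervalIntegrable (fun s => A / L / s ^ 2) volume t0 t := by
      apply ContinuousOn.intervalIntegrable
      rw [huIcc]
      exact continuousOn_const.div (continuousOn_pow 2)
        (fun s hs => pow_ne_zero _ (lt_of_lt_of_le ht0 hs.1).ne')
    rw [intervalIntegral.integral_eq_sub_of_hasDerivAt this hint]
    ring
  have hrem : |∫ s in t0..t, u' s * v s| ≤ A / (L * t0) := by
    have h1 : |∫ s in t0..t, u' s * v s| ≤ ∫ s in t0..t, |u' s| * |v s| := by
      simpa [Real.norm_eq_abs, abs_mul] using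
        intervalIntegral.norm_integral_le_integral_norm (f := fun s => u' s * v s) ht
    have h2 : ∫ s in t0..t, |u' s| * |v s| ≤ ∫ s in t0..t, A / L / s ^ 2 := by
      apply intervalIntegral.integral_mono_on ht
      · simpa [abs_mul] using hIu'v.abs
      · apply ContinuousOn.intervalIntegrable
        rw [huIcc]
        exact continuousOn_const.div (continuousOn_pow 2)
          (fun s hs => pow_ne_zero _ (lt_of_lt_of_le ht0 hs.1).ne')
      · intro s hs
        have hs0 : 0 < s := lt_of_lt_of_le ht0 hs.1
        have := mul_le_mul (hu'b s hs) (hvb s) (abs_nonneg _) (div_nonneg hA (sq_nonneg s))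
        calc |u' s| * |v s| ≤ A / s ^ 2 * (1 / L) := this
          _ = A / L / s ^ 2 := by ring
    have h3 : A / L / t0 - A / L / t ≤ A / (L * t0) := by
      rw [div_div]
      linarith [div_nonneg hC (ht0.trans_le ht).le]
    rw [hval] at h2
    linarith
  have hb1 : |u t * v t| ≤ 1 / (L * t0) := by
    rw [abs_mul]
    calc |u t| * |v t| ≤ 1 / t0 * (1 / L) :=
        mul_le_mul (hub t ⟨ht, le_refl t⟩) (hvb t) (abs_nonneg _) (by positivity)
      _ = 1 / (L * t0) := by field_simp
  have hb0 : |u t0 * v t0| ≤ 1 / (L * t0) := by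
    rw [abs_mul]
    calc |u t0| * |v t0| ≤ 1 / t0 * (1 / L) :=
        mul_le_mul (hub t0 ⟨le_refl t0, ht⟩) (hvb t0) (abs_nonneg _) (by positivity)
      _ = 1 / (L * t0) := by field_simp
  have habs : |u t * v t - u t0 * v t0 - ∫ s in t0..t, u' s * v s| ≤
      |u t * v t| + |u t0 * v t0| + |∫ s in t0..t, u' s * v s| := by
    calc |u t * v t - u t0 * v t0 - ∫ s in t0..t, u' s * v s|
        ≤ |u t * v t - u t0 * v t0| + |∫ s in t0..t, u' s * v s| := abs_sub _ _
      _ ≤ |u t * v t| + |u t0 * v t0| + |∫ s in t0..t, u' s * v s| := by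
          linarith [abs_sub (u t * v t) (u t0 * v t0)]
  have : (2 + A) / (L * t0) = 1 / (L * t0) + 1 / (L * t0) + A / (L * t0) := by ring
  rw [this]
  linarith

theorem osc_int_bound
    (H0 lam t0 : ℝ) (hH0 : 0 < H0) (hlam : 0 < lam) (ht0 : 0 < t0)
    (h h' : ℝ → ℝ)
    (hhd : ∀ t ∈ Ici t0, HasDerivAt h (h' t) t)
    (hh'c : ContinuousOn h' (Ici t0))
    (hh' : ∀ t ∈ Ici t0, |h' t| ≤ H0 / t) :
    ∀ n : ℕ, 0 < n → ∀ t ∈ Ici t0,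
      |∫ s in t0..t, Real.cos ((n : ℝ) * lam * s + (n : ℝ) * h s) / s| ≤
        2 * (H0 + 4) / (lam * t0) := by
  intro n hn t htmem
  have ht : t0 ≤ t := htmem
  set N : ℝ := (n : ℝ) with hNdef
  have hN : 1 ≤ N := by
    have h1 : 1 ≤ n := hn
    rw [hNdef]
    exact_mod_cast h1
  have hN0 : 0 < N := lt_of_lt_of_le one_pos hN
  set L : ℝ := N * lam with hLdef
  have hL : 0 < L := mul_pos hN0 hlam
  set A : ℝ := N * H0 + 1 with hAdef
  have hA : 0 ≤ A := by positivity
  set u1 : ℝ → ℝ := fun s => Real.cos (N * h s) / s with hu1def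
  set u1' : ℝ → ℝ := fun s =>
    (-Real.sin (N * h s) * (N * h' s) * s - Real.cos (N * h s) * 1) / s ^ 2 with hu1'def
  set v1 : ℝ → ℝ := fun s => Real.sin (L * s) / L with hv1def
  set v1' : ℝ → ℝ := fun s => Real.cos (L * s) with hv1'def
  set u2 : ℝ → ℝ := fun s => Real.sin (N * h s) / s with hu2def
  set u2' : ℝ → ℝ := fun s =>
    (Real.cos (N * h s) * (N * h' s) * s - Real.sin (N * h s) * 1) / s ^ 2 with hu2'def
  set v2 : ℝ → ℝ := fun s => -(Real.cos (L * s) / L) with hv2def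
  set v2' : ℝ → ℝ := fun s => Real.sin (L * s) with hv2'def
  have key : ∀ s : ℝ, Real.cos (N * lam * s + N * h s) / s = u1 s * v1' s - u2 s * v2' s := by
    intro s
    simp only [hu1def, hv1'def, hu2def, hv2'def, hLdef]
    rw [mul_assoc, Real.cos_add]
    ring
  -- common continuity facts
  have hsub : Icc t0 t ⊆ Ici t0 := Icc_subset_Ici_self
  have hhc : ContinuousOn h (Icc t0 t) := fun s hs =>
    (hhd s (hsub hs)).continuousAt.continuousWithinAt
  have hNh : ContinuousOn (fun s => N * h s) (Icc t0 t) := continuousOn_const.mul hhc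
  have hcos : ContinuousOn (fun s => Real.cos (N * h s)) (Icc t0 t) :=
    Real.continuous_cos.comp_continuousOn hNh
  have hsin : ContinuousOn (fun s => Real.sin (N * h s)) (Icc t0 t) :=
    Real.continuous_sin.comp_continuousOn hNh
  have hh'cIcc : ContinuousOn h' (Icc t0 t) := hh'c.mono hsub
  have hsq : ∀ s ∈ Icc t0 t, (s : ℝ) ^ 2 ≠ 0 := fun s hs =>
    pow_ne_zero _ (lt_of_lt_of_le ht0 hs.1).ne'
  have hid : ContinuousOn (fun s : ℝ => s) (Icc t0 t) := continuousOn_id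
  -- derivatives
  have hder1 : ∀ s ∈ Icc t0 t, HasDerivAt u1 (u1' s) s := by
    intro s hs
    have hs0 : s ≠ 0 := (lt_of_lt_of_le ht0 hs.1).ne'
    have hh := hhd s (hsub hs)
    exact ((hh.const_mul N).cos).div (hasDerivAt_id s) hs0
  have hder2 : ∀ s ∈ Icc t0 t, HasDerivAt u2 (u2' s) s := by
    intro s hs
    have hs0 : s ≠ 0 := (lt_of_lt_of_le ht0 hs.1).ne'
    have hh := hhd s (hsub hs)
    exact ((hh.const_mul N).sin).div (hasDerivAt_id s) hs0
  have hderv1 : ∀ s : ℝ, HasDerivAt v1 (v1' s) s := by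
    intro s
    have := (((hasDerivAt_id s).const_mul L).sin).div_const L
    refine this.congr_deriv ?_
    simp only [hv1'def, id]
    field_simp
  have hderv2 : ∀ s : ℝ, HasDerivAt v2 (v2' s) s := by
    intro s
    have := ((((hasDerivAt_id s).const_mul L).cos).div_const L).neg
    refine this.congr_deriv ?_
    simp only [hv2'def, id]
    field_simp
  -- continuity of u1', u2'
  have hcont1 : ContinuousOn u1' (Icc t0 t) := by
    apply ContinuousOn.div _ (continuousOn_pow 2) hsq
    exact ((hsin.neg.mul (continuousOn_const.mul hh'cIcc)).mul hid).sub (hcos.mul continuousOn_const)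
  have hcont2 : ContinuousOn u2' (Icc t0 t) := by
    apply ContinuousOn.div _ (continuousOn_pow 2) hsq
    exact ((hcos.mul (continuousOn_const.mul hh'cIcc)).mul hid).sub (hsin.mul continuousOn_const)
  -- bounds on u
  have hub1 : ∀ s ∈ Icc t0 t, |u1 s| ≤ 1 / t0 := by
    intro s hs
    have hs0 : 0 < s := lt_of_lt_of_le ht0 hs.1
    rw [hu1def, abs_div, abs_of_pos hs0]
    exact div_le_div₀ (by norm_num) (Real.abs_cos_le_one _) ht0 hs.1
  have hub2 : ∀ s ∈ Icc t0 t, |u2 s| ≤ 1 / t0 := by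
    intro s hs
    have hs0 : 0 < s := lt_of_lt_of_le ht0 hs.1
    rw [hu2def, abs_div, abs_of_pos hs0]
    exact div_le_div₀ (by norm_num) (Real.abs_sin_le_one _) ht0 hs.1
  -- bounds on v
  have hvb1 : ∀ s : ℝ, |v1 s| ≤ 1 / L := by
    intro s
    rw [hv1def, abs_div, abs_of_pos hL]
    exact div_le_div₀ (by norm_num) (Real.abs_sin_le_one _) hL (le_refl L)
  have hvb2 : ∀ s : ℝ, |v2 s| ≤ 1 / L := by
    intro s
    rw [hv2def, abs_neg, abs_div, abs_of_pos hL]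
    exact div_le_div₀ (by norm_num) (Real.abs_cos_le_one _) hL (le_refl L)
  -- bounds on u'
  have hnum : ∀ s ∈ Icc t0 t, |h' s| * s ≤ H0 := by
    intro s hs
    have hs0 : 0 < s := lt_of_lt_of_le ht0 hs.1
    exact (le_div_iff₀ hs0).mp (hh' s (hsub hs))
  have hu'b1 : ∀ s ∈ Icc t0 t, |u1' s| ≤ A / s ^ 2 := by
    intro s hs
    have hs0 : 0 < s := lt_of_lt_of_le ht0 hs.1
    rw [hu1'def, abs_div, abs_of_pos (pow_pos hs0 2)]
    gcongr
    have e1 : |(-Real.sin (N * h s) * (N * h' s) * s)| =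
        |Real.sin (N * h s)| * (N * |h' s| * s) := by
      rw [abs_mul, abs_mul, abs_neg, abs_mul, abs_of_pos hN0, abs_of_pos hs0]; ring
    have k1 : N * (|h' s| * s) ≤ N * H0 := mul_le_mul_of_nonneg_left (hnum s hs) hN0.le
    have k2 : |Real.sin (N * h s)| * (N * |h' s| * s) ≤ 1 * (N * |h' s| * s) :=
      mul_le_mul_of_nonneg_right (Real.abs_sin_le_one _) (by positivity)
    calc |(-Real.sin (N * h s) * (N * h' s) * s - Real.cos (N * h s) * 1)|
        ≤ |(-Real.sin (N * h s) * (N * h' s) * s)| + |Real.cos (N * h s) * 1| := abs_sub _ _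
      _ ≤ A := by
          rw [e1, mul_one, hAdef]
          have := Real.abs_cos_le_one (N * h s)
          nlinarith [k1, k2]
  have hu'b2 : ∀ s ∈ Icc t0 t, |u2' s| ≤ A / s ^ 2 := by
    intro s hs
    have hs0 : 0 < s := lt_of_lt_of_le ht0 hs.1
    rw [hu2'def, abs_div, abs_of_pos (pow_pos hs0 2)]
    gcongr
    have e1 : |(Real.cos (N * h s) * (N * h' s) * s)| =
        |Real.cos (N * h s)| * (N * |h' s| * s) := by
      rw [abs_mul, abs_mul, abs_mul, abs_of_pos hN0, abs_of_pos hs0]; ring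
    have k1 : N * (|h' s| * s) ≤ N * H0 := mul_le_mul_of_nonneg_left (hnum s hs) hN0.le
    have k2 : |Real.cos (N * h s)| * (N * |h' s| * s) ≤ 1 * (N * |h' s| * s) :=
      mul_le_mul_of_nonneg_right (Real.abs_cos_le_one _) (by positivity)
    calc |(Real.cos (N * h s) * (N * h' s) * s - Real.sin (N * h s) * 1)|
        ≤ |(Real.cos (N * h s) * (N * h' s) * s)| + |Real.sin (N * h s) * 1| := abs_sub _ _
      _ ≤ A := by
          rw [e1, mul_one, hAdef]
          have := Real.abs_sin_le_one (N * h s)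
          nlinarith [k1, k2]
  -- integrability of the two products
  have huIcc : uIcc t0 t = Icc t0 t := uIcc_of_le ht
  have hu1c : ContinuousOn u1 (Icc t0 t) := fun s hs =>
    (hder1 s hs).continuousAt.continuousWithinAt
  have hu2c : ContinuousOn u2 (Icc t0 t) := fun s hs =>
    (hder2 s hs).continuousAt.continuousWithinAt
  have hv1'c : Continuous v1' := Real.continuous_cos.comp (continuous_const.mul continuous_id)
  have hv2'c : Continuous v2' := Real.continuous_sin.comp (continuous_const.mul continuous_id)
  have hI1 : IntervalIntegrable (fun s => u1 s * v1' s) volume t0 t := by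
    apply ContinuousOn.intervalIntegrable
    rw [huIcc]; exact hu1c.mul hv1'c.continuousOn
  have hI2 : IntervalIntegrable (fun s => u2 s * v2' s) volume t0 t := by
    apply ContinuousOn.intervalIntegrable
    rw [huIcc]; exact hu2c.mul hv2'c.continuousOn
  have b1 := osc_aux L t0 t A hL ht0 ht hA u1 u1' v1 v1' hder1 hderv1 hcont1 hv1'c hub1 hvb1 hu'b1
  have b2 := osc_aux L t0 t A hL ht0 ht hA u2 u2' v2 v2' hder2 hderv2 hcont2 hv2'c hub2 hvb2 hu'b2
  calc |∫ s in t0..t, Real.cos (N * lam * s + N * h s) / s|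
      = |(∫ s in t0..t, u1 s * v1' s) - ∫ s in t0..t, u2 s * v2' s| := by
        rw [← intervalIntegral.integral_sub hI1 hI2]
        simp only [key]
    _ ≤ |∫ s in t0..t, u1 s * v1' s| + |∫ s in t0..t, u2 s * v2' s| := abs_sub _ _
    _ ≤ (2 + A) / (L * t0) + (2 + A) / (L * t0) := add_le_add b1 b2
    _ ≤ 2 * (H0 + 4) / (lam * t0) := by
        have he : (2 + A) / (L * t0) + (2 + A) / (L * t0) = 2 * (2 + A) / (L * t0) := by ring
        rw [he, div_le_div_iff₀ (by positivity) (by positivity), hAdef, hLdef]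
        nlinarith [mul_pos hlam ht0, mul_le_mul_of_nonneg_right hN (mul_pos hlam ht0).le,
          hH0.le]
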